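/- arXiv:2410.02648 — 3 statements merged into one kernel-verified Lean document; each statement's English description precedes it below -/
import Mathlib

section
/- Let A be a free abelian group of finite rank. Then the commutator map induces a group isomorphism from the second cohomology group H²(A, ℂ^×) (with trivial action, using normalized 2-cocycles) onto the group Alt²(A) of alternating bilinear maps A × A → ℂ^×. That is: every alternating bicharacter c : A × A → ℂ^× arises as c(a,b) = f(a,b)f(b,a)^{-1} for some normalized 2-cocycle f, and two 2-cocycles have the same commutator map if and only if they differ by a coboundary. -/
/-- A normalized 2-cocycle on an abelian group `A` with coefficients in `ℂˣ`
(trivial action). -/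
def IsNormalizedCocycle {A : Type*} [AddCommGroup A] (f : A → A → ℂˣ) : Prop :=
  (∀ a, f 0 a = 1 ∧ f a 0 = 1) ∧
    ∀ a b c, f a b * f (a + b) c = f a (b + c) * f b c

/-- `f` is a coboundary: `f(a,b) = h(a+b)h(a)⁻¹h(b)⁻¹` for some `h` with `h(0)=1`. -/
def IsCoboundary {A : Type*} [AddCommGroup A] (f : A → A → ℂˣ) : Prop :=
  ∃ h : A → ℂˣ, h 0 = 1 ∧ ∀ a b, f a b = h (a + b) * (h a)⁻¹ * (h b)⁻¹

/-- An alternating bicharacter (alternating bilinear map) `c : A × A → ℂˣ`. -/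
def IsAltBicharacter {A : Type*} [AddCommGroup A] (c : A → A → ℂˣ) : Prop :=
  (∀ a b x, c (a + b) x = c a x * c b x) ∧
    (∀ a b x, c a (b + x) = c a b * c a x) ∧
    ∀ a, c a a = 1

section Aux

variable {A : Type*} [AddCommGroup A]

/-- Expansion of a multiplicative-valued additive map over a finite basis. -/
lemma hom_expand {ι : Type*} [Fintype ι] (b : Module.Basis ι ℤ A) (φ : A → ℂˣ)
    (hφ : ∀ u v, φ (u + v) = φ u * φ v) (a : A) :
    φ a = ∏ i, φ (b i) ^ (b.repr a i) := by
  let ψ : A →+ Additive ℂˣ :=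
    AddMonoidHom.mk' (fun u => Additive.ofMul (φ u)) (fun u v => by
      simp [hφ u v])
  have h1 : φ a = Additive.toMul (ψ a) := rfl
  rw [h1]
  conv_lhs => rw [← Module.Basis.sum_repr b a]
  rw [map_sum, toMul_sum]
  refine Finset.prod_congr rfl fun i _ => ?_
  rw [map_zsmul, toMul_zsmul]
  rfl

/-- The twisted commutative group structure on `ℂˣ × A` from a symmetric
normalized cocycle. -/
def extGroup (q : A → A → ℂˣ) (hq : IsNormalizedCocycle q)
    (hs : ∀ a b, q a b = q b a) : CommGroup (ℂˣ × A) where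
  mul x y := (x.1 * y.1 * q x.2 y.2, x.2 + y.2)
  one := (1, 0)
  inv x := (x.1⁻¹ * (q x.2 (-x.2))⁻¹, -x.2)
  mul_assoc x y z := by
    have hc := hq.2 x.2 y.2 z.2
    refine Prod.ext ?_ (add_assoc _ _ _)
    show x.1 * y.1 * q x.2 y.2 * z.1 * q (x.2 + y.2) z.2
        = x.1 * (y.1 * z.1 * q y.2 z.2) * q x.2 (y.2 + z.2)
    calc x.1 * y.1 * q x.2 y.2 * z.1 * q (x.2 + y.2) z.2
        = x.1 * y.1 * z.1 * (q x.2 y.2 * q (x.2 + y.2) z.2) := by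
          rw [Units.ext_iff]; push_cast; ring
      _ = x.1 * y.1 * z.1 * (q x.2 (y.2 + z.2) * q y.2 z.2) := by rw [hc]
      _ = x.1 * (y.1 * z.1 * q y.2 z.2) * q x.2 (y.2 + z.2) := by
          rw [Units.ext_iff]; push_cast; ring
  one_mul x := by
    refine Prod.ext ?_ (zero_add _)
    show 1 * x.1 * q 0 x.2 = x.1
    rw [(hq.1 x.2).1, one_mul, mul_one]
  mul_one x := by
    refine Prod.ext ?_ (add_zero _)
    show x.1 * 1 * q x.2 0 = x.1
    rw [(hq.1 x.2).2, mul_one, mul_one]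
  inv_mul_cancel x := by
    refine Prod.ext ?_ (neg_add_cancel _)
    show x.1⁻¹ * (q x.2 (-x.2))⁻¹ * x.1 * q (-x.2) x.2 = 1
    rw [← hs x.2 (-x.2), Units.ext_iff]
    push_cast
    field_simp
  mul_comm x y := by
    refine Prod.ext ?_ (add_comm _ _)
    show x.1 * y.1 * q x.2 y.2 = y.1 * x.1 * q y.2 x.2
    rw [hs x.2 y.2, mul_comm x.1 y.1]

/-- A symmetric normalized cocycle on a free abelian group is a coboundary. -/
lemma symm_cocycle_coboundary [Module.Free ℤ A] (q : A → A → ℂˣ)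
    (hq : IsNormalizedCocycle q) (hs : ∀ a b, q a b = q b a) :
    IsCoboundary q := by
  letI : CommGroup (ℂˣ × A) := extGroup q hq hs
  let π : Additive (ℂˣ × A) →+ A :=
    AddMonoidHom.mk' (fun x => (Additive.toMul x).2) (fun x y => rfl)
  have hsurj : Function.Surjective π.toIntLinearMap := fun a =>
    ⟨Additive.ofMul ((1 : ℂˣ), a), rfl⟩
  obtain ⟨s, hsec⟩ := Module.projective_lifting_property π.toIntLinearMap
    (LinearMap.id : A →ₗ[ℤ] A) hsurj
  have hsnd : ∀ a : A, (Additive.toMul (s a)).2 = a := fun a =>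
    congrArg (fun φ : A →ₗ[ℤ] A => φ a) hsec
  refine ⟨fun a => (Additive.toMul (s a)).1, ?_, ?_⟩
  · show (Additive.toMul (s 0)).1 = 1
    have h0 : s 0 = 0 := map_zero s
    rw [h0]
    rfl
  · intro a b
    show q a b = (Additive.toMul (s (a + b))).1 * ((Additive.toMul (s a)).1)⁻¹
      * ((Additive.toMul (s b)).1)⁻¹
    have hadd : s (a + b) = s a + s b := map_add s a b
    have hmul : Additive.toMul (s (a + b))
        = Additive.toMul (s a) * Additive.toMul (s b) := by
      rw [hadd]; rfl
    have h1 : (Additive.toMul (s (a + b))).1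
        = (Additive.toMul (s a)).1 * (Additive.toMul (s b)).1
          * q (Additive.toMul (s a)).2 (Additive.toMul (s b)).2 :=
      congrArg Prod.fst hmul
    rw [hsnd a, hsnd b] at h1
    rw [h1, Units.ext_iff]
    push_cast
    field_simp

end Aux

/-- For a free abelian group `A` of finite rank, the commutator map
`f ↦ ((a,b) ↦ f(a,b)f(b,a)⁻¹)` induces an isomorphism `H²(A,ℂˣ) ≅ Alt²(A)`:
every alternating bicharacter arises from a normalized 2-cocycle, and two
2-cocycles have the same commutator map iff they differ by a coboundary. -/
theorem cocycle_commutator_iso (A : Type*) [AddCommGroup A]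
    [Module.Free ℤ A] [Module.Finite ℤ A] :
    (∀ c : A → A → ℂˣ, IsAltBicharacter c →
      ∃ f : A → A → ℂˣ, IsNormalizedCocycle f ∧ ∀ a b, c a b = f a b * (f b a)⁻¹) ∧
    ∀ f g : A → A → ℂˣ, IsNormalizedCocycle f → IsNormalizedCocycle g →
      ((∀ a b, f a b * (f b a)⁻¹ = g a b * (g b a)⁻¹) ↔
        IsCoboundary (fun a b => f a b * (g a b)⁻¹)) := by
  constructor
  · -- Part 1: surjectivity onto alternating bicharacters
    intro c hc
    obtain ⟨hc1, hc2, hc3⟩ := hc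
    have hskew : ∀ u v : A, c v u = (c u v)⁻¹ := by
      intro u v
      have h := hc3 (u + v)
      rw [hc1, hc2, hc2, hc3, hc3, one_mul, mul_one] at h
      rw [eq_inv_iff_mul_eq_one, mul_comm]
      exact h
    classical
    set n := Fintype.card (Module.Free.ChooseBasisIndex ℤ A) with hn
    let b : Module.Basis (Fin n) ℤ A :=
      (Module.Free.chooseBasis ℤ A).reindex (Fintype.equivFin _)
    set f : A → A → ℂˣ := fun a x =>
      ∏ i, ∏ j, if i < j then c (b i) (b j) ^ (b.repr a i * b.repr x j) else 1
      with hf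
    have hfl : ∀ a a' x, f (a + a') x = f a x * f a' x := by
      intro a a' x
      rw [hf]
      simp only [map_add, Finsupp.add_apply]
      rw [← Finset.prod_mul_distrib]
      refine Finset.prod_congr rfl fun i _ => ?_
      rw [← Finset.prod_mul_distrib]
      refine Finset.prod_congr rfl fun j _ => ?_
      split
      · rw [add_mul, zpow_add]
      · rw [mul_one]
    have hfr : ∀ a x x', f a (x + x') = f a x * f a x' := by
      intro a x x'
      rw [hf]
      simp only [map_add, Finsupp.add_apply]
      rw [← Finset.prod_mul_distrib]
      refine Finset.prod_congr rfl fun i _ => ?_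
      rw [← Finset.prod_mul_distrib]
      refine Finset.prod_congr rfl fun j _ => ?_
      split
      · rw [mul_add, zpow_add]
      · rw [mul_one]
    have hf0 : ∀ a, f 0 a = 1 ∧ f a 0 = 1 := by
      intro a
      constructor <;>
      · rw [hf]
        simp only [map_zero, Finsupp.coe_zero, Pi.zero_apply, zero_mul, mul_zero,
          zpow_zero, ite_self, Finset.prod_const_one]
    refine ⟨f, ⟨hf0, ?_⟩, ?_⟩
    · intro a x y
      rw [hfl, hfr, mul_assoc]
    · -- commutator identity
      intro a x
      have hexp : c a x = ∏ i, ∏ j, c (b i) (b j) ^ (b.repr a i * b.repr x j) := by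
        rw [hom_expand b (fun u => c u x) (fun u v => hc1 u v x) a]
        refine Finset.prod_congr rfl fun i _ => ?_
        rw [hom_expand b (fun v => c (b i) v) (fun u v => hc2 (b i) u v) x]
        rw [← Finset.prod_zpow]
        refine Finset.prod_congr rfl fun j _ => ?_
        rw [← zpow_mul, mul_comm]
      have hsplit : ∀ i j : Fin n,
          c (b i) (b j) ^ (b.repr a i * b.repr x j)
          = (if i < j then c (b i) (b j) ^ (b.repr a i * b.repr x j) else 1)
            * (if j < i then c (b i) (b j) ^ (b.repr a i * b.repr x j) else 1)
            * (if i = j then c (b i) (b j) ^ (b.repr a i * b.repr x j) else 1) := by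
        intro i j
        rcases lt_trichotomy i j with h | h | h
        · simp [h, not_lt_of_gt h, h.ne]
        · simp [h, lt_irrefl]
        · simp [h, not_lt_of_gt h, h.ne']
      have hdiag : ∀ i j : Fin n,
          (if i = j then c (b i) (b j) ^ (b.repr a i * b.repr x j) else 1) = 1 := by
        intro i j
        split
        · subst ‹i = j›; rw [hc3, one_zpow]
        · rfl
      rw [hexp]
      calc ∏ i, ∏ j, c (b i) (b j) ^ (b.repr a i * b.repr x j)
          = ∏ i, ∏ j,
              ((if i < j then c (b i) (b j) ^ (b.repr a i * b.repr x j) else 1)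
              * (if j < i then c (b i) (b j) ^ (b.repr a i * b.repr x j) else 1)
              * (if i = j then c (b i) (b j) ^ (b.repr a i * b.repr x j) else 1)) := by
            exact Finset.prod_congr rfl fun i _ => Finset.prod_congr rfl fun j _ => hsplit i j
        _ = (∏ i, ∏ j, (if i < j then c (b i) (b j) ^ (b.repr a i * b.repr x j) else 1))
            * (∏ i, ∏ j, (if j < i then c (b i) (b j) ^ (b.repr a i * b.repr x j) else 1))
            * (∏ i, ∏ j, (if i = j then c (b i) (b j) ^ (b.repr a i * b.repr x j) else 1)) := by
            simp only [Finset.prod_mul_distrib]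
        _ = f a x
            * (∏ i, ∏ j, (if j < i then c (b i) (b j) ^ (b.repr a i * b.repr x j) else 1))
            * 1 := by
            rw [hf]
            congr 1
            simp only [hdiag, Finset.prod_const_one]
        _ = f a x * (f x a)⁻¹ := by
            rw [mul_one]
            congr 1
            rw [Finset.prod_comm]
            rw [hf, ← Finset.prod_inv_distrib]
            refine Finset.prod_congr rfl fun j _ => ?_
            rw [← Finset.prod_inv_distrib]
            refine Finset.prod_congr rfl fun i _ => ?_
            split
            · rw [hskew (b i) (b j), inv_zpow, ← zpow_neg, ← zpow_neg]
              congr 1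
              ring
            · rw [inv_one]
  · -- Part 2
    intro f g hfc hgc
    constructor
    · intro hcomm
      apply symm_cocycle_coboundary
      · -- quotient is a normalized cocycle
        refine ⟨fun a => ⟨?_, ?_⟩, ?_⟩
        · show f 0 a * (g 0 a)⁻¹ = 1
          rw [(hfc.1 a).1, (hgc.1 a).1, inv_one, mul_one]
        · show f a 0 * (g a 0)⁻¹ = 1
          rw [(hfc.1 a).2, (hgc.1 a).2, inv_one, mul_one]
        · intro a b x
          have h1 := hfc.2 a b x
          have h2 := hgc.2 a b x
          show f a b * (g a b)⁻¹ * (f (a + b) x * (g (a + b) x)⁻¹)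
            = f a (b + x) * (g a (b + x))⁻¹ * (f b x * (g b x)⁻¹)
          rw [Units.ext_iff] at h1 h2 ⊢
          push_cast at h1 h2 ⊢
          field_simp at h1 h2 ⊢
          linear_combination (g a (b+x) : ℂ) * (g b x) * h1 - (f a (b+x) : ℂ) * (f b x) * h2
      · -- symmetry
        intro a b
        have h := hcomm a b
        show f a b * (g a b)⁻¹ = f b a * (g b a)⁻¹
        rw [Units.ext_iff] at h ⊢
        push_cast at h ⊢
        field_simp at h ⊢
        linear_combination h
    · rintro ⟨h, h0, hh⟩ a b
      have hab := hh a b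
      have hba := hh b a
      simp only at hab hba
      rw [add_comm b a] at hba
      rw [Units.ext_iff] at hab hba ⊢
      push_cast at hab hba ⊢
      field_simp at hab hba ⊢
      have key : ((f a b : ℂ) * (g b a)) * ((h a : ℂ) * (h b))
          = ((g a b : ℂ) * (f b a)) * ((h a : ℂ) * (h b)) := by
        linear_combination (g b a : ℂ) * hab - (g a b : ℂ) * hba
      have hne : ((h a : ℂ) * (h b)) ≠ 0 :=
        mul_ne_zero (h a).ne_zero (h b).ne_zero
      exact mul_right_cancel₀ hne key
end

section
/- With the setup of the Narain lattice: let II be an even unimodular lattice of signature (n,n) inside H = II ⊗ ℝ, p a projection as above with p̄ = 1−p, φ the self-adjoint isometric involution exchanging H_l = ker p̄ and H_r = ker p, and define t : II → H_l by t(α) = pα + φ(p̄α). If α ∈ ker(t), then for all β ∈ II, exp(πi((α,β)_lat + (α, φβ)_lat)) = 1, where (·,·)_lat is the lattice bilinear form (which takes integer values on II). -/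
open Complex in
/-- Narain lattice setup: `II` (realized as a `ℤ`-submodule `L` of `H = II ⊗ ℝ`)
is an even unimodular lattice of rank `2n` and signature `(n,n)` for the form
`Blat`; `p` is the projection with positive-definite `ker(1-p)` and
negative-definite `ker p`; `φ` is the self-adjoint (for `(·,·)_p`) isometric
involution exchanging `H_l = ker(1-p)` and `H_r = ker p`, with `(φv,v)_lat = 0`;
and `t(α) = pα + φ(p̄α)`.  If `α ∈ ker t` then for all `β ∈ II`,
`exp(πi((α,β)_lat + (α,φβ)_lat)) = 1`. -/
theorem narain_ker_t_exp (n : ℕ) (H : Type*) [AddCommGroup H] [Module ℝ H]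
    (Blat : H →ₗ[ℝ] H →ₗ[ℝ] ℝ) (hsymm : ∀ x y, Blat x y = Blat y x)
    (p : H →ₗ[ℝ] H) (hp : ∀ x, p (p x) = p x)
    (horth : ∀ x y, p x = x → p y = 0 → Blat x y = 0)
    (hpos : ∀ x, p x = x → x ≠ 0 → 0 < Blat x x)
    (hneg : ∀ x, p x = 0 → x ≠ 0 → Blat x x < 0)
    (φ : H →ₗ[ℝ] H) (hφ2 : ∀ x, φ (φ x) = x)
    (hφrl : ∀ x, p x = 0 → p (φ x) = φ x)
    (hφlr : ∀ x, p x = x → p (φ x) = 0)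
    (hφiso : ∀ v w, Blat (p (φ v)) (p (φ w)) - Blat (φ v - p (φ v)) (φ w - p (φ w))
        = Blat (p v) (p w) - Blat (v - p v) (w - p w))
    (hφself : ∀ v w, Blat (p (φ v)) (p w) - Blat (φ v - p (φ v)) (w - p w)
        = Blat (p v) (p (φ w)) - Blat (v - p v) (φ w - p (φ w)))
    (hφlat : ∀ v, Blat (φ v) v = 0)
    (L : Submodule ℤ H)
    (b : Module.Basis (Fin (2 * n)) ℤ L)
    (hspan : Submodule.span ℝ (L : Set H) = ⊤)
    (hint : ∀ x y : L, ∃ m : ℤ, Blat (x : H) (y : H) = (m : ℝ))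
    (heven : ∀ x : L, ∃ m : ℤ, Blat (x : H) (x : H) = 2 * (m : ℝ))
    (G : Matrix (Fin (2 * n)) (Fin (2 * n)) ℤ)
    (hG : ∀ i j, (G i j : ℝ) = Blat ((b i : L) : H) ((b j : L) : H))
    (hunimodular : G.det = 1 ∨ G.det = -1)
    (α : L) (hα : p (α : H) + φ ((α : H) - p (α : H)) = 0) :
    ∀ β : L,
      Complex.exp (Real.pi * Complex.I *
        (((Blat (α : H) (β : H) + Blat (α : H) (φ (β : H)) : ℝ)) : ℂ)) = 1 := by
  intro β
  set a := (α : H) with ha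
  set c := (β : H) with hc
  -- orthogonal decomposition of the form
  have hdec : ∀ u v : H, Blat u v = Blat (p u) (p v) + Blat (u - p u) (v - p v) := by
    intro u v
    have h1 : Blat (p u) (v - p v) = 0 := horth _ _ (hp u) (by simp [map_sub, hp])
    have h2 : Blat (u - p u) (p v) = 0 := by
      rw [hsymm]; exact horth _ _ (hp v) (by simp [map_sub, hp])
    have e : Blat u v = Blat (p u + (u - p u)) (p v + (v - p v)) := by
      rw [show p u + (u - p u) = u from by abel, show p v + (v - p v) = v from by abel]
    simp only [map_add, LinearMap.add_apply] at e
    linarith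
  -- φ flips the sign of Blat on H_r
  have hflipR : ∀ v w, p v = 0 → p w = 0 → Blat (φ v) (φ w) = - Blat v w := by
    intro v w hv hw
    have h := hφiso v w
    rw [hφrl v hv, hφrl w hw, hv, hw] at h
    simp only [sub_self, map_zero, LinearMap.zero_apply, sub_zero, zero_sub] at h
    linarith
  -- φ flips the sign of Blat on H_l
  have hflipL : ∀ v w, p v = v → p w = w → Blat (φ v) (φ w) = - Blat v w := by
    intro v w hv hw
    have h := hφiso v w
    rw [hφlr v hv, hφlr w hw, hv, hw] at h
    simp only [sub_self, map_zero, LinearMap.zero_apply, sub_zero, zero_sub] at h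
    linarith
  -- consequences of α ∈ ker t
  have h1 : φ (a - p a) = - p a := by
    have h := hα; rw [add_comm] at h; exact eq_neg_of_add_eq_zero_left h
  have h2 : a - p a = - φ (p a) := by
    have h := congrArg φ hα
    simp only [map_add, hφ2, map_zero] at h
    rw [add_comm] at h; exact eq_neg_of_add_eq_zero_left h
  -- decomposition of φ c
  have hc1 : φ c = φ (p c) + φ (c - p c) := by
    rw [← map_add]; congr 1; abel
  have hpc0 : p (c - p c) = 0 := by simp [map_sub, hp]
  have hpφc : p (φ c) = φ (c - p c) := by
    rw [hc1, map_add, hφlr (p c) (hp c), hφrl _ hpc0, zero_add]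
  have hpa0 : p (a - p a) = 0 := by simp [map_sub, hp]
  -- key computation : Blat a (φ c) = Blat a c
  have key : Blat a (φ c) = Blat a c := by
    have e := hdec a (φ c)
    rw [hpφc] at e
    have e2 : φ c - φ (c - p c) = φ (p c) := by rw [hc1]; abel
    rw [e2] at e
    have t1 : Blat (p a) (φ (c - p c)) = Blat (a - p a) (c - p c) := by
      have t : Blat (p a) (φ (c - p c)) = - Blat (φ (a - p a)) (φ (c - p c)) := by
        rw [h1]; simp [map_neg]
      rw [t, hflipR _ _ hpa0 hpc0, neg_neg]
    have t2 : Blat (a - p a) (φ (p c)) = Blat (p a) (p c) := by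
      have t : Blat (a - p a) (φ (p c)) = - Blat (φ (p a)) (φ (p c)) := by
        rw [h2]; simp [map_neg]
      rw [t, hflipL _ _ (hp a) (hp c), neg_neg]
    rw [t1, t2] at e
    rw [hdec a c]; linarith
  -- integrality finishes the proof
  obtain ⟨m, hm⟩ := hint α β
  rw [key, ha, hc, hm]
  have : (Real.pi : ℂ) * Complex.I * (((m : ℝ) + (m : ℝ) : ℝ) : ℂ)
      = (m : ℤ) * (2 * Real.pi * Complex.I) := by push_cast; ring
  rw [this, Complex.exp_int_mul_two_pi_mul_I]
end

section
/- Let A ∈ T_r be a binary tree with r leaves labeled by {1,…,r}, r ≥ 2, and consider the coordinate functions on ℂ^r: z_A(z₁,…,z_r) = z_{r_A} (the coordinate of the rightmost leaf), x_A = z_{L(t_A)} − z_{R(t_A)} (difference at the top vertex), and ζ_e = z_{d(e)-\text{vertex difference}} / z_{u(e)-\text{vertex difference}} for each internal edge e, where z_v = z_{L(v)} − z_{R(v)} for internal vertices v. Then the combined map Ψ_A = (z_A, x_A, (ζ_e)_e) is a biholomorphism from the configuration space X_r(ℂ) = {(z₁,…,z_r) : z_i ≠ z_j for i ≠ j} onto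 its image in ℂ^r, and its inverse Ψ_A^{-1} is given by polynomials in z_A, x_A, and the ζ_e, hence extends to a holomorphic (polynomial) map ℂ² × ℂ^{E(A)} → ℂ^r. -/
open scoped Matrix

/-- The configuration space `X₅(ℂ)` of 5 distinct points. -/
def X5 : Set (Fin 5 → ℂ) := {z | ∀ i j, i ≠ j → z i ≠ z j}

/-- The tree coordinate map `Ψ_A` for `A = (23)((15)4)` (0-indexed:
`z₁,…,z₅ = z 0,…,z 4`):
`Ψ_A(z) = (z_A, x_A, ζ_a, ζ_b, ζ_c) =
(z₄, z₃−z₄, (z₂−z₃)/(z₃−z₄), (z₁−z₅)/(z₅−z₄), (z₅−z₄)/(z₃−z₄))`. -/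
noncomputable def PsiA : (Fin 5 → ℂ) → (Fin 5 → ℂ) := fun z =>
  ![z 3, z 2 - z 3, (z 1 - z 2) / (z 2 - z 3), (z 0 - z 4) / (z 4 - z 3),
    (z 4 - z 3) / (z 2 - z 3)]

/-- The polynomial inverse `Ψ_A⁻¹(z_A, x_A, ζ_a, ζ_b, ζ_c) =
(x_A ζ_c (1+ζ_b) + z_A, (1+ζ_a) x_A + z_A, x_A + z_A, z_A, ζ_c x_A + z_A)`. -/
noncomputable def PsiAInv : (Fin 5 → ℂ) → (Fin 5 → ℂ) := fun w =>
  ![w 1 * w 4 * (1 + w 3) + w 0, (1 + w 2) * w 1 + w 0, w 1 + w 0, w 0,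
    w 4 * w 1 + w 0]

lemma analyticAt_eval (k : Fin 5) (z : Fin 5 → ℂ) :
    AnalyticAt ℂ (fun x : Fin 5 → ℂ => x k) z :=
  (ContinuousLinearMap.proj (R := ℂ) (φ := fun _ : Fin 5 => ℂ) k).analyticAt z

lemma leftInv : ∀ z ∈ X5, PsiAInv (PsiA z) = z := by
  intro z hz
  have h23 : z 2 - z 3 ≠ 0 := sub_ne_zero.mpr (hz 2 3 (by decide))
  have h43 : z 4 - z 3 ≠ 0 := sub_ne_zero.mpr (hz 4 3 (by decide))
  funext i
  fin_cases i <;>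
    simp only [PsiA, PsiAInv, Matrix.cons_val_zero, Matrix.cons_val_one,
      Matrix.head_cons, Matrix.cons_val_two, Matrix.tail_cons,
      Matrix.cons_val_three, Matrix.cons_val_four, Matrix.cons_val_fin_one] <;>
    (try field_simp) <;> (try ring) <;> (try rfl)

/-- `Ψ_A` is a biholomorphism from `X₅(ℂ)` onto its image: it is injective on
`X₅(ℂ)`, holomorphic there, and its inverse is a polynomial map (hence entire)
which is a left inverse on `X₅(ℂ)`. -/
theorem psiA_biholomorphism :
    Set.InjOn PsiA X5 ∧
    AnalyticOnNhd ℂ PsiA X5 ∧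
    (∀ w : Fin 5 → ℂ, AnalyticAt ℂ PsiAInv w) ∧
    ∀ z ∈ X5, PsiAInv (PsiA z) = z := by
  refine ⟨fun z hz z' hz' h => ?_, fun z hz => ?_, fun w => ?_, leftInv⟩
  · rw [← leftInv z hz, ← leftInv z' hz', h]
  · have h23 : z 2 - z 3 ≠ 0 := sub_ne_zero.mpr (hz 2 3 (by decide))
    have h43 : z 4 - z 3 ≠ 0 := sub_ne_zero.mpr (hz 4 3 (by decide))
    have e := fun k => analyticAt_eval k z
    rw [analyticAt_pi_iff]
    intro i
    fin_cases i
    · exact e 3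
    · exact (e 2).sub (e 3)
    · exact ((e 1).sub (e 2)).div ((e 2).sub (e 3)) h23
    · exact ((e 0).sub (e 4)).div ((e 4).sub (e 3)) h43
    · exact ((e 4).sub (e 3)).div ((e 2).sub (e 3)) h23
  · have e := fun k => analyticAt_eval k w
    rw [analyticAt_pi_iff]
    intro i
    fin_cases i
    · exact (((e 1).mul (e 4)).mul (analyticAt_const.add (e 3))).add (e 0)
    · exact ((analyticAt_const.add (e 2)).mul (e 1)).add (e 0)
    · exact ((e 1).add (e 0))
    · exact e 0
    · exact ((e 4).mul (e 1)).add (e 0)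
end
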